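/- In the neighbourhood Morse geometry of type (λ, n−λ) with n ≥ 3 and 2 ≤ λ ≤ n−1, fix a unit vector Θ ∈ ℝ^λ and define the future-inextendible timelike curve ω(t) = ((ε/2)e^{−t}Θ, 0) ∈ N for t ∈ [0,∞). Then the chronological past of ω equals the past region of the Morse point: {p ∈ N : p ≪ ω(t) for some t ≥ 0} = P = {(x,y) ∈ N : |y| < m₁|x|}. In particular this set is independent of the choice of the unit vector Θ. -/

import Mathlib

noncomputable section

open Set

/-- Points of `ℝⁿ = ℝ^λ × ℝ^{n−λ}`. -/
abbrev Pt (n lam : ℕ) := EuclideanSpace ℝ (Fin lam) × EuclideanSpace ℝ (Fin (n - lam))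

/-- The Euclidean inner ℝ product on `ℝⁿ = ℝ^λ × ℝ^{n−λ}`. -/
def iprod {n lam : ℕ} (v w : Pt n lam) : ℝ :=
  (inner ℝ v.1 w.1 : ℝ) + (inner ℝ v.2 w.2 : ℝ)

/-- The punctured ball `N = {p : 0 < |p| < ε}` (Euclidean norm). -/
def NN (n lam : ℕ) (ε : ℝ) : Set (Pt n lam) :=
  {p | 0 < ‖p.1‖ ^ 2 + ‖p.2‖ ^ 2 ∧ ‖p.1‖ ^ 2 + ‖p.2‖ ^ 2 < ε ^ 2}

/-- The Euclidean gradient of the Morse function `f(x,y) = −|x|² + |y|²`. -/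
def gradf {n lam : ℕ} (p : Pt n lam) : Pt n lam :=
  ((-2 : ℝ) • p.1, (2 : ℝ) • p.2)

/-- The Morse metric with flat auxiliary metric (as a quadratic form):
`g_p(w,w) = |∇f(p)|²⟨w,w⟩ − ζ⟨∇f(p),w⟩²`. -/
def gN (ζ : ℝ) {n lam : ℕ} (p w : Pt n lam) : ℝ :=
  iprod (gradf p) (gradf p) * iprod w w - ζ * iprod (gradf p) w ^ 2

def m1 (ζ : ℝ) : ℝ := (Real.sqrt ζ - 1) / Real.sqrt (ζ - 1)
def m2 (ζ : ℝ) : ℝ := (Real.sqrt ζ + 1) / Real.sqrt (ζ - 1)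

/-- A future-directed timelike curve: a C¹ curve in `N` with everywhere timelike,
future-pointing (`⟨∇f(γ), γ'⟩ > 0`) tangent. -/
def Timelike (ζ ε : ℝ) {n lam : ℕ} (γ γ' : ℝ → Pt n lam) : Prop :=
  (∀ t ∈ Icc (0 : ℝ) 1, HasDerivAt γ (γ' t) t) ∧
  ContinuousOn γ' (Icc (0 : ℝ) 1) ∧
  (∀ t ∈ Icc (0 : ℝ) 1, γ t ∈ NN n lam ε) ∧
  (∀ t ∈ Icc (0 : ℝ) 1, gN ζ (γ t) (γ' t) < 0) ∧
  (∀ t ∈ Icc (0 : ℝ) 1, 0 < iprod (gradf (γ t)) (γ' t))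

/-- The chronology relation `q ≪ p`. -/
def chron (ζ ε : ℝ) {n lam : ℕ} (q p : Pt n lam) : Prop :=
  ∃ γ γ', Timelike ζ ε γ γ' ∧ γ 0 = q ∧ γ 1 = p

def Iplus (ζ ε : ℝ) {n lam : ℕ} (q : Pt n lam) : Set (Pt n lam) :=
  {p ∈ NN n lam ε | chron ζ ε q p}

def Iminus (ζ ε : ℝ) {n lam : ℕ} (q : Pt n lam) : Set (Pt n lam) :=
  {p ∈ NN n lam ε | chron ζ ε p q}

/-- The common past `↓U` (interior in the open set `N` of the set of points
chronologically preceding every point of `U`). -/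
def downSet (ζ ε : ℝ) {n lam : ℕ} (U : Set (Pt n lam)) : Set (Pt n lam) :=
  interior {p ∈ NN n lam ε | ∀ u ∈ U, chron ζ ε p u}

/-- The common future `↑U`. -/
def upSet (ζ ε : ℝ) {n lam : ℕ} (U : Set (Pt n lam)) : Set (Pt n lam) :=
  interior {p ∈ NN n lam ε | ∀ u ∈ U, chron ζ ε u p}

theorem cone_lemma (s m A B : ℝ) (hs : 1 < s) (hm0 : 0 ≤ m) (hm : m ^ 2 = (s - 1) / (s + 1))
    (hu : 0 ≤ m * A - B) (hv : 0 < m * B - A)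
    (hlt : (1 + m ^ 2) * (A ^ 2 + B ^ 2) < s ^ 2 * (m * B - A) ^ 2) : False := by
  have hm2 : m ^ 2 * (s + 1) = s - 1 := by
    field_simp at hm; linarith [hm]
  have hmlt : m ^ 2 < 1 := by nlinarith
  have hiden2 : s ^ 2 * (1 - m ^ 2) ^ 2 = (1 + m ^ 2) ^ 2 := by nlinarith
  set u' := m * A - B with hu'
  set v' := m * B - A with hv'
  have this1 : (1 - m^2)^2 * (A^2+B^2) = (1+m^2)*(u'^2+v'^2) + 4*m*u'*v' := by
    rw [hu', hv']; ring
  have key : (1 - m^2)^2 * ((1 + m^2) * (A^2 + B^2) - s^2 * v'^2)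
      = (1 + m^2)^2 * u'^2 + 4 * m * (1 + m^2) * u' * v' := by
    linear_combination (1 + m^2) * this1 - v'^2 * hiden2
  have h6 : 0 < 1 - m^2 := by linarith
  have h5 : 0 < (1 - m^2)^2 := by positivity
  nlinarith [key, mul_nonneg (mul_nonneg hm0 hu) hv.le, sq_nonneg u',
    mul_pos h5 (by linarith : (0:ℝ) < s^2*v'^2 - (1+m^2)*(A^2+B^2))]

theorem hasDerivAt_norm_comp {E : Type*} [NormedAddCommGroup E] [InnerProductSpace ℝ E]
    (x : ℝ → E) (X : E) (t : ℝ) (hx : HasDerivAt x X t) (h : x t ≠ 0) :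
    HasDerivAt (fun s => ‖x s‖) ((inner ℝ (x t) X : ℝ) / ‖x t‖) t := by
  have h1 : HasDerivAt (fun s => (inner ℝ (x s) (x s) : ℝ)) (2 * (inner ℝ (x t) X : ℝ)) t := by
    have := hx.inner ℝ hx
    refine this.congr_deriv ?_
    rw [real_inner_comm]; ring
  have h2 : (inner ℝ (x t) (x t) : ℝ) ≠ 0 := inner_self_ne_zero.2 h
  have h3 := (Real.hasDerivAt_sqrt h2).comp t h1
  have h4 : ((fun u => Real.sqrt u) ∘ fun s => (inner ℝ (x s) (x s) : ℝ)) = fun s => ‖x s‖ := by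
    funext s
    simp only [Function.comp]
    rw [real_inner_self_eq_norm_mul_norm, Real.sqrt_mul_self (norm_nonneg _)]
  rw [h4] at h3
  refine h3.congr_deriv ?_
  rw [real_inner_self_eq_norm_mul_norm, Real.sqrt_mul_self (norm_nonneg _)]
  have : ‖x t‖ ≠ 0 := norm_ne_zero_iff.2 h
  field_simp

theorem sqrt_facts (ζ : ℝ) (hζ : 1 < ζ) :
    1 < Real.sqrt ζ ∧ 0 < m1 ζ ∧ m1 ζ ^ 2 = (Real.sqrt ζ - 1) / (Real.sqrt ζ + 1) := by
  have h0 : (0:ℝ) < ζ := by linarith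
  have hs : Real.sqrt ζ ^ 2 = ζ := Real.sq_sqrt h0.le
  have hs1 : 1 < Real.sqrt ζ := by nlinarith [Real.sqrt_nonneg ζ]
  have ht : Real.sqrt (ζ - 1) ^ 2 = ζ - 1 := Real.sq_sqrt (by linarith)
  have ht0 : 0 < Real.sqrt (ζ - 1) := Real.sqrt_pos.2 (by linarith)
  refine ⟨hs1, div_pos (by linarith) ht0, ?_⟩
  rw [m1, div_pow, ht, div_eq_div_iff (by linarith) (by linarith)]
  nlinarith


lemma fut_eq {n lam : ℕ} (p w : Pt n lam) :
    iprod (gradf p) w = 2*(inner ℝ p.2 w.2 : ℝ) - 2*(inner ℝ p.1 w.1 : ℝ) := by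
  simp only [iprod, gradf, real_inner_smul_left]
  ring

lemma gN_eq (ζ : ℝ) {n lam : ℕ} (p w : Pt n lam) :
    gN ζ p w = 4*(‖p.1‖^2+‖p.2‖^2)*(‖w.1‖^2+‖w.2‖^2)
      - ζ*(2*(inner ℝ p.2 w.2 : ℝ) - 2*(inner ℝ p.1 w.1 : ℝ))^2 := by
  simp only [gN, iprod, gradf, real_inner_smul_left, real_inner_smul_right,
    real_inner_self_eq_norm_sq, norm_smul, Real.norm_eq_abs, abs_neg, abs_two]
  ring

set_option maxHeartbeats 1000000 in
theorem forward {n lam : ℕ} (ζ ε : ℝ) (hζ : 1 < ζ)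
    (p q : Pt n lam) (hq2 : q.2 = 0) (hq1 : q.1 ≠ 0)
    (h : chron ζ ε p q) : ‖p.2‖ < m1 ζ * ‖p.1‖ := by
  obtain ⟨γ, γ', ⟨hderiv, hcont, hNN, hg, hfut⟩, h0, h1⟩ := h
  obtain ⟨hs1, hm1pos, hm1sq⟩ := sqrt_facts ζ hζ
  set s := Real.sqrt ζ with hsdef
  set m := m1 ζ with hmdef
  set φ : ℝ → ℝ := fun t => m * ‖(γ t).1‖ - ‖(γ t).2‖ with hφ
  by_contra hcon
  push_neg at hcon
  have hφ0 : φ 0 ≤ 0 := by simp only [hφ, h0]; linarith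
  have hφ1 : 0 < φ 1 := by
    simp only [hφ, h1, hq2, norm_zero]
    have : 0 < ‖q.1‖ := norm_pos_iff.2 hq1
    nlinarith [mul_pos hm1pos this]
  -- continuity of γ and φ on Icc
  have hγc : ContinuousOn γ (Icc 0 1) := fun t ht => (hderiv t ht).continuousAt.continuousWithinAt
  have hφc : ContinuousOn φ (Icc 0 1) :=
    (continuousOn_const.mul (hγc.fst.norm)).sub (hγc.snd.norm)
  -- the supremum of the bad set
  set S : Set ℝ := {t ∈ Icc (0:ℝ) 1 | φ t ≤ 0} with hSdef
  have hS0 : (0:ℝ) ∈ S := ⟨⟨le_refl _, zero_le_one⟩, hφ0⟩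
  have hSsub : S ⊆ Icc 0 1 := fun t ht => ht.1
  have hSclosed : IsClosed S := by
    have : S = Icc 0 1 ∩ φ ⁻¹' (Iic 0) := by ext t; simp [hSdef, And.comm]
    rw [this]
    exact hφc.preimage_isClosed_of_isClosed isClosed_Icc isClosed_Iic
  have hScomp : IsCompact S := isCompact_Icc.of_isClosed_subset hSclosed hSsub
  set σ := sSup S with hσdef
  have hσS : σ ∈ S := hScomp.sSup_mem ⟨0, hS0⟩
  have hσIcc : σ ∈ Icc (0:ℝ) 1 := hSsub hσS
  have hσ1 : σ < 1 := lt_of_le_of_ne hσIcc.2 (by intro he; rw [he] at hσS; linarith [hσS.2])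
  have hpos : ∀ t ∈ Ioc σ 1, 0 < φ t := by
    intro t ht
    by_contra hc
    push_neg at hc
    have : t ∈ S := ⟨⟨le_trans hσIcc.1 ht.1.le, ht.2⟩, hc⟩
    exact absurd (le_csSup (hScomp.bddAbove) this) (not_le.2 ht.1)
  -- φ σ = 0
  have hγca : ContinuousAt γ σ := (hderiv σ hσIcc).continuousAt
  have hφca : ContinuousAt φ σ :=
    (continuousAt_const.mul (hγca.fst.norm)).sub (hγca.snd.norm)
  have hφσ0 : φ σ = 0 := by
    refine le_antisymm hσS.2 ?_
    have htd : Filter.Tendsto φ (nhdsWithin σ (Ioi σ)) (nhds (φ σ)) :=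
      hφca.tendsto.mono_left nhdsWithin_le_nhds
    refine ge_of_tendsto htd ?_
    filter_upwards [Ioc_mem_nhdsGT_of_mem ⟨le_refl σ, hσ1⟩] with t ht
    exact (hpos t ht).le
  -- data at the crossing time σ
  set x := (γ σ).1 with hx
  set y := (γ σ).2 with hy
  set X := (γ' σ).1 with hX
  set Y := (γ' σ).2 with hY
  set a := ‖x‖ with ha
  set b := ‖y‖ with hb
  have hba : b = m * a := by
    have : m * a - b = 0 := hφσ0
    linarith
  have hax : 0 < a := by
    rcases hNN σ hσIcc with ⟨hpos0, _⟩
    rcases lt_or_ge 0 a with h | h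
    · exact h
    · exfalso
      have ha0 : a = 0 := le_antisymm h (norm_nonneg _)
      have hb0 : b = 0 := by rw [hba, ha0, mul_zero]
      rw [← ha, ← hb] at hpos0
      nlinarith
  have hbx : 0 < b := by rw [hba]; exact mul_pos hm1pos hax
  have hxne : x ≠ 0 := norm_pos_iff.1 hax
  have hyne : y ≠ 0 := norm_pos_iff.1 hbx
  -- derivatives of the norms at σ
  have hXd : HasDerivAt (fun t => (γ t).1) X σ := (hderiv σ hσIcc).fst
  have hYd : HasDerivAt (fun t => (γ t).2) Y σ := (hderiv σ hσIcc).snd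
  have hna : HasDerivAt (fun t => ‖(γ t).1‖) ((inner ℝ x X : ℝ) / a) σ :=
    hasDerivAt_norm_comp _ _ _ hXd hxne
  have hnb : HasDerivAt (fun t => ‖(γ t).2‖) ((inner ℝ y Y : ℝ) / b) σ :=
    hasDerivAt_norm_comp _ _ _ hYd hyne
  set A := (inner ℝ x X : ℝ) / a with hA
  set B := (inner ℝ y Y : ℝ) / b with hB
  have hφd : HasDerivAt φ (m * A - B) σ := (hna.const_mul m).sub hnb
  -- the right derivative is nonnegative
  have hu : 0 ≤ m * A - B := by
    rw [hasDerivAt_iff_tendsto_slope] at hφd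
    have hmono : nhdsWithin σ (Ioi σ) ≤ nhdsWithin σ {σ}ᶜ :=
      nhdsWithin_mono σ (fun t ht => ne_of_gt ht)
    refine ge_of_tendsto (hφd.mono_left hmono) ?_
    filter_upwards [Ioc_mem_nhdsGT_of_mem ⟨le_refl σ, hσ1⟩] with t ht
    rw [slope_def_field, hφσ0, sub_zero]
    exact div_nonneg (hpos t ht).le (by linarith [ht.1] : (0:ℝ) ≤ t - σ)
  have hixX : (inner ℝ x X : ℝ) = a * A := by rw [hA]; field_simp
  have hiyY : (inner ℝ y Y : ℝ) = b * B := by rw [hB]; field_simp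
  -- future condition, scalar form
  have hfutσ := hfut σ hσIcc
  rw [fut_eq] at hfutσ
  rw [← hx, ← hy, ← hX, ← hY, hixX, hiyY] at hfutσ
  -- timelike condition, scalar form
  have hgσ := hg σ hσIcc
  rw [gN_eq] at hgσ
  rw [← hx, ← hy, ← hX, ← hY, hixX, hiyY, ← ha, ← hb] at hgσ
  have hs2 : s^2 = ζ := Real.sq_sqrt (by linarith)
  -- Cauchy-Schwarz, scalar form
  have hCSx : (a*A)*(a*A) ≤ a^2 * ‖X‖^2 := by
    have h1 : (inner ℝ x X : ℝ) * (inner ℝ x X : ℝ) ≤ (inner ℝ x x : ℝ) * (inner ℝ X X : ℝ) :=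
      real_inner_mul_inner_self_le x X
    rw [real_inner_self_eq_norm_sq, real_inner_self_eq_norm_sq, hixX, ← ha] at h1
    exact h1
  have hCSy : (b*B)*(b*B) ≤ b^2 * ‖Y‖^2 := by
    have h1 : (inner ℝ y Y : ℝ) * (inner ℝ y Y : ℝ) ≤ (inner ℝ y y : ℝ) * (inner ℝ Y Y : ℝ) :=
      real_inner_mul_inner_self_le y Y
    rw [real_inner_self_eq_norm_sq, real_inner_self_eq_norm_sq, hiyY, ← hb] at h1
    exact h1
  -- make everything opaque and finish with scalar algebra
  set nX := ‖X‖^2 with hnX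
  set nY := ‖Y‖^2 with hnY
  have hnX0 : 0 ≤ nX := by rw [hnX]; positivity
  have hnY0 : 0 ≤ nY := by rw [hnY]; positivity
  clear_value nX nY
  clear hnX hnY hixX hiyY hφd hna hnb hXd hYd hxne hyne hφσ0 hφca hγca hpos hσ1 hσIcc hσS
    hScomp hSclosed hSsub hS0 hφc hγc hφ1 hφ0 hcon hderiv hcont hNN hg hfut h0 h1 hq2 hq1
  clear hA hB hx hy hX hY ha hb hφ hSdef hσdef
  clear_value A B a b x y X Y m s σ
  clear x y X Y φ S σ γ γ' p q
  subst hba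
  have hA2 : A^2 ≤ nX := by nlinarith [mul_pos hax hax]
  have hB2 : B^2 ≤ nY := by nlinarith [mul_pos hbx hbx]
  have hv : 0 < m * B - A := by
    by_contra hc
    push_neg at hc
    nlinarith [mul_nonpos_of_nonneg_of_nonpos hax.le hc]
  have hlt : (1 + m^2) * (A^2 + B^2) < s^2 * (m*B - A)^2 := by
    have hfin : (4*a^2) * ((1+m^2)*(A^2+B^2)) < (4*a^2) * (s^2*(m*B-A)^2) := by
      rw [hs2]
      nlinarith [hgσ, mul_pos hax hax, sq_nonneg (m*B-A),
        mul_nonneg (mul_nonneg (sq_nonneg a) (by nlinarith : (0:ℝ) ≤ 1+m^2))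
          (by nlinarith : (0:ℝ) ≤ (nX - A^2) + (nY - B^2))]
    exact lt_of_mul_lt_mul_left hfin (by positivity)
  exact cone_lemma s m A B hs1 hm1pos.le hm1sq hu hv hlt

theorem exists_ortho {lam : ℕ} (h : 2 ≤ lam) (e₁ : EuclideanSpace ℝ (Fin lam)) :
    ∃ e₂ : EuclideanSpace ℝ (Fin lam), ‖e₂‖ = 1 ∧ (inner ℝ e₁ e₂ : ℝ) = 0 := by
  have hbot : (ℝ ∙ e₁)ᗮ ≠ ⊥ := by
    intro hc
    have htop : (ℝ ∙ e₁) = ⊤ := Submodule.orthogonal_eq_bot_iff.1 hc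
    have h1 : Module.finrank ℝ (ℝ ∙ e₁) ≤ 1 := by
      rcases eq_or_ne e₁ 0 with he | he
      · rw [he, Submodule.span_zero_singleton]; simp [finrank_bot]
      · rw [finrank_span_singleton he]
    have h2 : Module.finrank ℝ (EuclideanSpace ℝ (Fin lam)) = lam :=
      finrank_euclideanSpace_fin
    rw [htop, finrank_top] at h1
    omega
  obtain ⟨v, hvK, hv0⟩ := Submodule.ne_bot_iff _ |>.1 hbot
  refine ⟨‖v‖⁻¹ • v, ?_, ?_⟩
  · rw [norm_smul, norm_inv, norm_norm, inv_mul_cancel₀ (norm_ne_zero_iff.2 hv0)]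
  · rw [real_inner_smul_right]
    have : (inner ℝ e₁ v : ℝ) = 0 := by
      exact (Submodule.mem_orthogonal _ v).1 hvK e₁ (Submodule.mem_span_singleton_self e₁)
    rw [this, mul_zero]

set_option maxHeartbeats 1000000 in
theorem constr_ineq (ζ A Bb θ : ℝ) (hζ : 1 < ζ) (hA : 0 < A) (hB : 0 ≤ Bb)
    (hQ : A + Bb < Real.sqrt ζ * (A - Bb)) (hθ : θ^2 ≤ 10) :
    ∃ c : ℝ, 2 ≤ c ∧ ∀ σ : ℝ, 0 ≤ σ → σ ≤ 1 →
      0 < c*A - σ*(1+c*σ)*Bb ∧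
      (A + σ^2*Bb) * (A*(c^2+θ^2) + (1+c*σ)^2*Bb) < ζ*(c*A - σ*(1+c*σ)*Bb)^2 := by
  have hζ0 : (0:ℝ) < ζ := by linarith
  set s := Real.sqrt ζ with hsdef
  have hs2 : s^2 = ζ := Real.sq_sqrt hζ0.le
  have hs1 : 1 < s := by nlinarith [Real.sqrt_nonneg ζ]
  have hAB : Bb < A := by nlinarith
  set Q0 := ζ*(A-Bb)^2 - (A+Bb)^2 with hQ0def
  have hQ0 : 0 < Q0 := by
    nlinarith [mul_pos (by nlinarith : (0:ℝ) < s*(A-Bb) - (A+Bb))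
      (by nlinarith : (0:ℝ) < s*(A-Bb) + (A+Bb))]
  set c := (2*ζ+26)*A^2/Q0 + ζ + 2 with hcdef
  have hcQ : (2*ζ+26)*A^2 ≤ c * Q0 := by
    have he : c*Q0 = (2*ζ+26)*A^2 + (ζ+2)*Q0 := by
      rw [hcdef]; field_simp; ring
    nlinarith [he]
  have hcpos : 0 ≤ (2*ζ+26)*A^2/Q0 := by positivity
  have hc2 : (2:ℝ) ≤ c := by rw [hcdef]; linarith
  have hcζ : ζ ≤ c := by rw [hcdef]; linarith
  have hc0 : (0:ℝ) < c := by linarith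
  have hsc : s ≤ c := by nlinarith
  clear_value s Q0 c
  clear hcdef hcpos hsdef
  refine ⟨c, hc2, ?_⟩
  intro σ hσ0 hσ1
  have hσsq : σ^2 ≤ 1 := by nlinarith only [mul_le_mul_of_nonneg_left hσ1 hσ0, hσ1, hσ0]
  have hσBb : σ^2*Bb ≤ Bb := by
    linarith only [mul_le_mul_of_nonneg_right hσsq hB]
  have hσBb' : σ*Bb ≤ Bb := by
    linarith only [mul_le_mul_of_nonneg_right hσ1 hB]
  have hσB0 : 0 ≤ σ^2*Bb := by positivity
  have hfut : 0 < c*A - σ*(1+c*σ)*Bb := by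
    have p1 : c*(σ^2*Bb) ≤ c*Bb := mul_le_mul_of_nonneg_left hσBb hc0.le
    have p2 : s*(A-Bb) ≤ c*(A-Bb) := mul_le_mul_of_nonneg_right hsc (by linarith)
    linarith only [p1, p2, hQ, hσBb', hA]
  refine ⟨hfut, ?_⟩
  set T1 := ζ*(A-σ^2*Bb)^2 - (A+σ^2*Bb)^2 with hT1
  set T2 := ζ*(A-σ^2*Bb) + (A+σ^2*Bb) with hT2
  have hdec : ζ*(c*A - σ*(1+c*σ)*Bb)^2 - (A + σ^2*Bb) * (A*(c^2+θ^2) + (1+c*σ)^2*Bb)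
      = c^2*T1 - 2*c*σ*Bb*T2 + ζ*σ^2*Bb^2 - (A+σ^2*Bb)*(A*θ^2+Bb) := by
    rw [hT1, hT2]; ring
  clear_value T1 T2
  have b1 : Q0 ≤ T1 := by
    have q1 : (A-Bb)^2 ≤ (A-σ^2*Bb)^2 := by
      nlinarith only [mul_nonneg (by linarith : (0:ℝ) ≤ Bb - σ^2*Bb)
        (by linarith : (0:ℝ) ≤ (A-σ^2*Bb) + (A-Bb))]
    have q2 : (A+σ^2*Bb)^2 ≤ (A+Bb)^2 := by
      nlinarith only [mul_nonneg (by linarith : (0:ℝ) ≤ Bb - σ^2*Bb)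
        (by linarith only [hσB0, hA, hB] : (0:ℝ) ≤ (A+σ^2*Bb) + (A+Bb))]
    rw [hT1, hQ0def]
    have q3 : ζ*(A-Bb)^2 ≤ ζ*(A-σ^2*Bb)^2 := mul_le_mul_of_nonneg_left q1 hζ0.le
    linarith only [q2, q3]
  have b1' : c^2*Q0 ≤ c^2*T1 := mul_le_mul_of_nonneg_left b1 (sq_nonneg c)
  have b2 : 2*c*σ*Bb*T2 ≤ 2*c*(ζ+2)*A^2 := by
    have hT2a : 0 ≤ T2 := by
      rw [hT2]
      nlinarith only [mul_nonneg hζ0.le (by linarith : (0:ℝ) ≤ A - σ^2*Bb), hσB0, hA]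
    have hT2b : T2 ≤ (ζ+2)*A := by
      rw [hT2]
      nlinarith only [mul_nonneg hζ0.le hσB0, hσBb, hAB, hA,
        mul_le_mul_of_nonneg_left (by linarith : A - σ^2*Bb ≤ A) hζ0.le]
    have hσBbA : σ*Bb ≤ A := by linarith only [hσBb', hAB]
    have hm : (σ*Bb)*T2 ≤ A*((ζ+2)*A) :=
      mul_le_mul hσBbA hT2b hT2a (by linarith)
    have := mul_le_mul_of_nonneg_left hm (by linarith : (0:ℝ) ≤ 2*c)
    linarith only [this]
  have b3 : (A+σ^2*Bb)*(A*θ^2+Bb) ≤ 22*A^2 := by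
    have r1 : A+σ^2*Bb ≤ 2*A := by linarith only [hσBb, hAB]
    have r2 : A*θ^2+Bb ≤ 11*A := by
      have := mul_le_mul_of_nonneg_left hθ hA.le
      linarith only [this, hAB]
    have key := mul_le_mul r1 r2 (by positivity) (by linarith : (0:ℝ) ≤ 2*A)
    linarith only [key]
  have hmain : 2*c*(ζ+2)*A^2 + 22*A^2 < c^2*Q0 := by
    have h1 : c*((2*ζ+26)*A^2) ≤ c*(c*Q0) := mul_le_mul_of_nonneg_left hcQ hc0.le
    nlinarith only [h1, mul_pos (show (0:ℝ) < c-1 by linarith) (mul_pos hA hA), hA, hc2]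
  have hζσ : 0 ≤ ζ*σ^2*Bb^2 := by positivity
  linarith only [hdec, b1', b2, b3, hmain, hζσ]

set_option maxHeartbeats 1000000 in
theorem backward {n lam : ℕ} (hlam : 2 ≤ lam) (ζ ε : ℝ) (hζ : 1 < ζ) (hε : 0 < ε)
    (Θ : EuclideanSpace ℝ (Fin lam)) (hΘ : ‖Θ‖ = 1) (p : Pt n lam)
    (hp : p ∈ NN n lam ε) (hP : ‖p.2‖ < m1 ζ * ‖p.1‖) :
    ∃ t : ℝ, 0 ≤ t ∧ chron ζ ε p ((ε / 2 * Real.exp (-t)) • Θ,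
      (0 : EuclideanSpace ℝ (Fin (n - lam)))) := by
  obtain ⟨hs1, hm1pos, hm1sq⟩ := sqrt_facts ζ hζ
  have hζ0 : (0:ℝ) < ζ := by linarith
  have hsq2 : Real.sqrt ζ ^ 2 = ζ := Real.sq_sqrt hζ0.le
  -- basic quantities
  set α₀ := ‖p.1‖ with hα₀
  have hα0 : 0 < α₀ := by
    rcases lt_or_ge 0 α₀ with h | h
    · exact h
    · exfalso
      have : α₀ = 0 := le_antisymm h (norm_nonneg _)
      rw [this, mul_zero] at hP
      exact absurd hP (not_lt.2 (norm_nonneg _))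
  set A := α₀^2 with hAdef
  set Bb := ‖p.2‖^2 with hBdef
  have hA : 0 < A := by positivity
  have hB : 0 ≤ Bb := by positivity
  have hABε : A + Bb < ε^2 := hp.2
  have hαε : α₀ < ε := by nlinarith
  -- the cone inequality
  have hBbA : Bb < m1 ζ^2 * A := by
    have := mul_self_lt_mul_self (norm_nonneg p.2) hP
    rw [hBdef, hAdef]
    nlinarith [this]
  have hQ : A + Bb < Real.sqrt ζ * (A - Bb) := by
    set s := Real.sqrt ζ
    have hs0 : 0 < s + 1 := by linarith
    have h1 : m1 ζ^2 * (s+1) = s - 1 := by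
      rw [hm1sq]; field_simp
    have h2 : Bb * (s+1) < (s-1) * A := by
      calc Bb * (s+1) < (m1 ζ^2 * A) * (s+1) := by
            exact mul_lt_mul_of_pos_right hBbA hs0
        _ = (s-1) * A := by rw [mul_comm (m1 ζ^2) A, mul_assoc, h1]; ring
      
    nlinarith [h2]
  -- frame vectors
  set e₁ : EuclideanSpace ℝ (Fin lam) := α₀⁻¹ • p.1 with he₁def
  have he₁n : ‖e₁‖ = 1 := by
    rw [he₁def, norm_smul, norm_inv, Real.norm_eq_abs, abs_of_pos hα0, ← hα₀,
      inv_mul_cancel₀ (ne_of_gt hα0)]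
  have he₁e₁ : (inner ℝ e₁ e₁ : ℝ) = 1 := by
    rw [real_inner_self_eq_norm_sq, he₁n]; norm_num
  have hα₀e₁ : α₀ • e₁ = p.1 := by
    rw [he₁def, smul_smul, mul_inv_cancel₀ (ne_of_gt hα0), one_smul]
  clear_value e₁
  set co := (inner ℝ e₁ Θ : ℝ) with hcodef
  have hco1 : |co| ≤ 1 := by
    have := abs_real_inner_le_norm e₁ Θ
    rwa [he₁n, hΘ, one_mul] at this
  set θ := Real.arccos co with hθdef
  have hθ0 : 0 ≤ θ := Real.arccos_nonneg co
  have hθπ : θ ≤ Real.pi := Real.arccos_le_pi co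
  have hθsq : θ^2 ≤ 10 := by
    have hpi : Real.pi < 3.15 := by
      have := Real.pi_lt_d2
      norm_num at this ⊢
      linarith
    nlinarith
  have hcosθ : Real.cos θ = co := Real.cos_arccos (by linarith [abs_le.1 hco1]) (by linarith [abs_le.1 hco1])
  have hsinθ : Real.sin θ = Real.sqrt (1 - co^2) := Real.sin_arccos co
  -- second frame vector
  have he₁nsq : ‖e₁‖^2 = 1 := by rw [he₁n]; norm_num
  set w₂ : EuclideanSpace ℝ (Fin lam) := Θ - co • e₁ with hw₂def
  have hw₂n : ‖w₂‖^2 = 1 - co^2 := by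
    have hC : (inner ℝ Θ e₁ : ℝ) = co := by rw [hcodef, real_inner_comm]
    rw [hw₂def, norm_sub_sq_real, hΘ, norm_smul, real_inner_smul_right,
      hC, Real.norm_eq_abs, mul_pow, sq_abs, he₁nsq]
    ring
  obtain ⟨e₂, he₂n, he₁e₂⟩ : ∃ e₂ : EuclideanSpace ℝ (Fin lam),
      (‖e₂‖ = 1 ∧ (inner ℝ e₁ e₂ : ℝ) = 0) ∧ Real.cos θ • e₁ + Real.sin θ • e₂ = Θ := by
    rcases eq_or_ne w₂ 0 with hw | hw
    · obtain ⟨e₂, h1, h2⟩ := exists_ortho hlam e₁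
      refine ⟨e₂, ⟨h1, h2⟩, ?_⟩
      have hco2 : 1 - co^2 = 0 := by rw [← hw₂n, hw, norm_zero]; ring
      have hsin0 : Real.sin θ = 0 := by rw [hsinθ, hco2, Real.sqrt_zero]
      have hΘeq : Θ = co • e₁ := by
        have := hw₂def ▸ hw
        rwa [sub_eq_zero] at this
      rw [hcosθ, hsin0, zero_smul, add_zero, hΘeq]
    · refine ⟨‖w₂‖⁻¹ • w₂, ⟨?_, ?_⟩, ?_⟩
      · rw [norm_smul, norm_inv, norm_norm, inv_mul_cancel₀ (norm_ne_zero_iff.2 hw)]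
      · rw [real_inner_smul_right, hw₂def, inner_sub_right, real_inner_smul_right,
          he₁e₁, mul_one, ← hcodef, sub_self, mul_zero]
      · have hsin : Real.sin θ = ‖w₂‖ := by
          rw [hsinθ, ← hw₂n, Real.sqrt_sq (norm_nonneg _)]
        rw [hcosθ, hsin, smul_smul, mul_inv_cancel₀ (norm_ne_zero_iff.2 hw), one_smul,
          hw₂def]
        abel
  obtain ⟨he₂unit, he₁₂⟩ := he₂n
  have hΘdec : Real.cos θ • e₁ + Real.sin θ • e₂ = Θ := he₁e₂
  have he₂e₂ : (inner ℝ e₂ e₂ : ℝ) = 1 := by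
    rw [real_inner_self_eq_norm_sq, he₂unit]; norm_num
  have he₂e₁ : (inner ℝ e₂ e₁ : ℝ) = 0 := by rw [real_inner_comm]; exact he₁₂
  clear_value w₂ θ co
  clear hw₂n hw₂def hcosθ hsinθ hco1 hcodef hθdef hθπ he₁e₂ he₁nsq he₁n he₁def
  -- the constant c
  obtain ⟨c, hc2, hcineq⟩ := constr_ineq ζ A Bb θ hζ hA hB hQ hθsq
  -- the curve
  set Ed : ℝ → ℝ := fun s => Real.exp (-(c*s)) with hEd
  set f1 : ℝ → ℝ := fun s => α₀ * (Ed s * Real.cos (θ*s)) with hf1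
  set f2 : ℝ → ℝ := fun s => α₀ * (Ed s * Real.sin (θ*s)) with hf2
  set g : ℝ → ℝ := fun s => (1-s) * Ed s with hgfun
  set f1d : ℝ → ℝ := fun s => α₀ * ((Ed s * (-c)) * Real.cos (θ*s) + Ed s * (-Real.sin (θ*s) * θ)) with hf1d
  set f2d : ℝ → ℝ := fun s => α₀ * ((Ed s * (-c)) * Real.sin (θ*s) + Ed s * (Real.cos (θ*s) * θ)) with hf2d
  set gd : ℝ → ℝ := fun s => (-1) * Ed s + (1-s) * (Ed s * (-c)) with hgd
  set γ : ℝ → Pt n lam := fun s => (f1 s • e₁ + f2 s • e₂, g s • p.2) with hγdef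
  set γ' : ℝ → Pt n lam := fun s => (f1d s • e₁ + f2d s • e₂, gd s • p.2) with hγ'def
  have hEdd : ∀ s, HasDerivAt Ed (Ed s * (-c)) s := by
    intro s
    have h1 : HasDerivAt (fun u : ℝ => -(c*u)) (-c) s := by
      have h := (((hasDerivAt_id s).const_mul c).neg)
      simp at h ⊢; exact h
    have := (Real.hasDerivAt_exp (-(c*s))).comp s h1
    simp [hEd, mul_comm] at this ⊢; exact this
  have hcos : ∀ s, HasDerivAt (fun u => Real.cos (θ*u)) (-Real.sin (θ*s) * θ) s := by
    intro s
    have h1 : HasDerivAt (fun u : ℝ => θ*u) θ s := by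
      simpa using (hasDerivAt_id s).const_mul θ
    have h := (Real.hasDerivAt_cos (θ*s)).comp s h1
    simp at h ⊢; exact h
  have hsin : ∀ s, HasDerivAt (fun u => Real.sin (θ*u)) (Real.cos (θ*s) * θ) s := by
    intro s
    have h1 : HasDerivAt (fun u : ℝ => θ*u) θ s := by
      simpa using (hasDerivAt_id s).const_mul θ
    have h := (Real.hasDerivAt_sin (θ*s)).comp s h1
    exact h
  have hf1dd : ∀ s, HasDerivAt f1 (f1d s) s := fun s => ((hEdd s).mul (hcos s)).const_mul α₀
  have hf2dd : ∀ s, HasDerivAt f2 (f2d s) s := fun s => ((hEdd s).mul (hsin s)).const_mul α₀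
  have hgdd : ∀ s, HasDerivAt g (gd s) s := by
    intro s
    have h1 : HasDerivAt (fun u : ℝ => 1 - u) (-1) s := by
      simpa using (hasDerivAt_id s).const_sub 1
    have := h1.mul (hEdd s)
    simp [hgfun, hgd] at this ⊢; exact this
  have hγd : ∀ s, HasDerivAt γ (γ' s) s := fun s =>
    (((hf1dd s).smul_const e₁).add ((hf2dd s).smul_const e₂)).prodMk ((hgdd s).smul_const p.2)
  have hγ'cont : Continuous γ' := by
    rw [hγ'def, hf1d, hf2d, hgd, hEd]
    fun_prop
  -- inner ℝ products in the moving frame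
  have hinner1 : ∀ (a b a' b' : ℝ),
      (inner ℝ (a • e₁ + b • e₂) (a' • e₁ + b' • e₂) : ℝ) = a*a' + b*b' := by
    intro a b a' b'
    rw [inner_add_left, inner_add_right, inner_add_right, real_inner_smul_left,
      real_inner_smul_left, real_inner_smul_left, real_inner_smul_left,
      real_inner_smul_right, real_inner_smul_right, real_inner_smul_right,
      real_inner_smul_right, he₁e₁, he₂e₂, he₁₂, he₂e₁]
    ring
  -- pointwise scalar facts
  have key : ∀ s ∈ Icc (0:ℝ) 1, (γ s ∈ NN n lam ε) ∧ gN ζ (γ s) (γ' s) < 0 ∧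
      0 < iprod (gradf (γ s)) (γ' s) := by
    intro s hs
    obtain ⟨hsl, hsr⟩ := hs
    have hσ0 : 0 ≤ 1 - s := by linarith
    have hσ1 : 1 - s ≤ 1 := by linarith
    obtain ⟨hfutS, hgS⟩ := hcineq (1-s) hσ0 hσ1
    have hE0 : 0 < Ed s := Real.exp_pos _
    have hE1 : Ed s ≤ 1 := by
      rw [hEd]
      simp only
      rw [Real.exp_le_one_iff]
      nlinarith
    have pyth : Real.cos (θ*s)^2 + Real.sin (θ*s)^2 = 1 := Real.cos_sq_add_sin_sq (θ*s)
    set E := Ed s with hEs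
    set cs := Real.cos (θ*s) with hcs
    set sn := Real.sin (θ*s) with hsn
    clear_value E cs sn
    -- component values
    have hγ1 : (γ s).1 = f1 s • e₁ + f2 s • e₂ := by simp only [hγdef]
    have hγ2 : (γ s).2 = g s • p.2 := by simp only [hγdef]
    have hγ'1 : (γ' s).1 = f1d s • e₁ + f2d s • e₂ := by simp only [hγ'def]
    have hγ'2 : (γ' s).2 = gd s • p.2 := by simp only [hγ'def]
    have hf1v : f1 s = α₀ * (E * cs) := by simp only [hf1, hEs, hcs]
    have hf2v : f2 s = α₀ * (E * sn) := by simp only [hf2, hEs, hsn]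
    have hgv : g s = (1-s) * E := by simp only [hgfun, hEs]
    have hf1dv : f1d s = α₀ * ((E * (-c)) * cs + E * (-sn * θ)) := by simp only [hf1d, hEs, hcs, hsn]
    have hf2dv : f2d s = α₀ * ((E * (-c)) * sn + E * (cs * θ)) := by simp only [hf2d, hEs, hcs, hsn]
    have hgdv : gd s = (-1) * E + (1-s) * (E * (-c)) := by simp only [hgd, hEs]
    have hy2 : (inner ℝ p.2 p.2 : ℝ) = Bb := by rw [real_inner_self_eq_norm_sq, hBdef]
    -- the six scalar quantities
    have n1 : ‖(γ s).1‖^2 = A * E^2 := by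
      rw [← real_inner_self_eq_norm_sq, hγ1, hinner1, hf1v, hf2v, hAdef]
      linear_combination (α₀^2 * E^2) * pyth
    have n2 : ‖(γ s).2‖^2 = (1-s)^2 * E^2 * Bb := by
      rw [← real_inner_self_eq_norm_sq, hγ2, real_inner_smul_left, real_inner_smul_right,
        hy2, hgv]
      ring
    have n3 : ‖(γ' s).1‖^2 = A * E^2 * (c^2 + θ^2) := by
      rw [← real_inner_self_eq_norm_sq, hγ'1, hinner1, hf1dv, hf2dv, hAdef]
      linear_combination (α₀^2 * E^2 * (c^2 + θ^2)) * pyth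
    have n4 : ‖(γ' s).2‖^2 = (1 + c*(1-s))^2 * E^2 * Bb := by
      rw [← real_inner_self_eq_norm_sq, hγ'2, real_inner_smul_left, real_inner_smul_right,
        hy2, hgdv]
      ring
    have i1 : (inner ℝ (γ s).1 (γ' s).1 : ℝ) = -(c * A) * E^2 := by
      rw [hγ1, hγ'1, hinner1, hf1v, hf2v, hf1dv, hf2dv, hAdef]
      linear_combination (-(c * α₀^2) * E^2) * pyth
    have i2 : (inner ℝ (γ s).2 (γ' s).2 : ℝ) = -((1-s) * (1 + c*(1-s))) * E^2 * Bb := by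
      rw [hγ2, hγ'2, real_inner_smul_left, real_inner_smul_right, hy2, hgv, hgdv]
      ring
    refine ⟨⟨?_, ?_⟩, ?_, ?_⟩
    · rw [n1, n2]
      have : 0 < A * E^2 := by positivity
      nlinarith only [this, sq_nonneg ((1-s)*E), hB, mul_nonneg (mul_nonneg (sq_nonneg (1-s)) (sq_nonneg E)) hB]
    · rw [n1, n2]
      have hE2 : E^2 ≤ 1 := by nlinarith only [hE0, hE1]
      have hσB : (1-s)^2 * Bb ≤ Bb := by
        nlinarith only [hσ0, hσ1, hB, mul_le_mul_of_nonneg_right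
          (by nlinarith only [hσ0, hσ1] : (1-s)^2 ≤ 1) hB]
      have hle : (A + (1-s)^2*Bb) * E^2 ≤ (A + Bb) * 1 :=
        mul_le_mul (by linarith) hE2 (sq_nonneg E) (by linarith)
      nlinarith only [hle, hABε]
    · rw [gN_eq, n1, n2, n3, n4, i1, i2]
      have hfact : 4*(A*E^2 + (1-s)^2*E^2*Bb)*(A*E^2*(c^2+θ^2) + (1+c*(1-s))^2*E^2*Bb)
          - ζ*(2*(-((1-s)*(1+c*(1-s)))*E^2*Bb) - 2*(-(c*A)*E^2))^2
          = -(4*E^4*(ζ*(c*A - (1-s)*(1+c*(1-s))*Bb)^2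
              - (A + (1-s)^2*Bb)*(A*(c^2+θ^2) + (1+c*(1-s))^2*Bb))) := by
        ring
      rw [hfact]
      have h4 : 0 < 4*E^4 := by positivity
      nlinarith only [h4, hgS, mul_pos h4 (by linarith only [hgS] :
        0 < ζ*(c*A - (1-s)*(1+c*(1-s))*Bb)^2
          - (A + (1-s)^2*Bb)*(A*(c^2+θ^2) + (1+c*(1-s))^2*Bb))]
    · rw [fut_eq, i1, i2]
      nlinarith only [mul_pos (mul_pos hE0 hE0) hfutS]
  -- endpoints
  have hγ0 : γ 0 = p := by
    have h1 : f1 0 = α₀ := by rw [hf1, hEd]; simp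
    have h2 : f2 0 = 0 := by rw [hf2]; simp
    have h3 : g 0 = 1 := by rw [hgfun, hEd]; simp
    rw [hγdef]
    simp only [h1, h2, h3, zero_smul, add_zero, one_smul, hα₀e₁]
  set t := c - Real.log (2*α₀/ε) with htdef
  have h2αε : 0 < 2*α₀/ε := by positivity
  have ht0 : 0 ≤ t := by
    have hlog : Real.log (2*α₀/ε) ≤ 2*α₀/ε := Real.log_le_self h2αε.le
    have : 2*α₀/ε < 2 := by rw [div_lt_iff₀ hε]; linarith
    rw [htdef]; linarith
  have hexp : ε/2 * Real.exp (-t) = α₀ * Real.exp (-c) := by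
    rw [htdef, neg_sub, Real.exp_sub, Real.exp_log h2αε, Real.exp_neg]
    field_simp
  have hγ1 : γ 1 = ((ε / 2 * Real.exp (-t)) • Θ, (0:EuclideanSpace ℝ (Fin (n-lam)))) := by
    have h3 : g 1 = 0 := by rw [hgfun]; ring
    have h1 : f1 1 = (α₀ * Real.exp (-c)) * Real.cos θ := by
      rw [hf1, hEd]; simp only; rw [mul_one, mul_one]; ring
    have h2 : f2 1 = (α₀ * Real.exp (-c)) * Real.sin θ := by
      rw [hf2, hEd]; simp only; rw [mul_one, mul_one]; ring
    rw [hγdef]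
    simp only [h1, h2, h3, zero_smul]
    refine Prod.ext ?_ rfl
    show ((α₀ * Real.exp (-c)) * Real.cos θ) • e₁ + ((α₀ * Real.exp (-c)) * Real.sin θ) • e₂
      = (ε / 2 * Real.exp (-t)) • Θ
    have hv : (α₀ * Real.exp (-c) * Real.cos θ) • e₁ + (α₀ * Real.exp (-c) * Real.sin θ) • e₂
        = (α₀ * Real.exp (-c)) • (Real.cos θ • e₁ + Real.sin θ • e₂) := by
      rw [smul_add, smul_smul, smul_smul]
    rw [hv, hΘdec, ← hexp]
  exact ⟨t, ht0, γ, γ', ⟨fun s _ => hγd s, hγ'cont.continuousOn,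
    fun s hs => (key s hs).1, fun s hs => (key s hs).2.1, fun s hs => (key s hs).2.2⟩, hγ0, hγ1⟩

/-- for `n ≥ 3`, `2 ≤ λ ≤ n−1`, the chronological past of the
future-inextendible timelike curve `ω(t) = ((ε/2)e^{−t}Θ, 0)` (with `‖Θ‖ = 1`)
equals the past region `P = {(x,y) ∈ N : |y| < m₁|x|}` of the Morse point;
in particular it is independent of the unit vector `Θ`. -/
theorem stmt9 (n lam : ℕ) (hn : 3 ≤ n) (hlam1 : 2 ≤ lam) (hlam2 : lam ≤ n - 1)
    (ζ ε : ℝ) (hζ : 1 < ζ) (hε : 0 < ε)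
    (Θ : EuclideanSpace ℝ (Fin lam)) (hΘ : ‖Θ‖ = 1) :
    {p : Pt n lam | p ∈ NN n lam ε ∧ ∃ t : ℝ, 0 ≤ t ∧
        chron ζ ε p ((ε / 2 * Real.exp (-t)) • Θ,
          (0 : EuclideanSpace ℝ (Fin (n - lam))))} =
      {p ∈ NN n lam ε | ‖p.2‖ < m1 ζ * ‖p.1‖} := by
  ext p
  simp only [Set.mem_setOf_eq, Set.mem_sep_iff]
  constructor
  · rintro ⟨hpN, t, ht, hch⟩
    refine ⟨hpN, ?_⟩
    refine forward ζ ε hζ p ((ε / 2 * Real.exp (-t)) • Θ,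
      (0 : EuclideanSpace ℝ (Fin (n - lam)))) rfl ?_ hch
    have hsc : (0:ℝ) < ε / 2 * Real.exp (-t) := by positivity
    have hΘ0 : Θ ≠ 0 := by
      intro hc
      rw [hc, norm_zero] at hΘ
      norm_num at hΘ
    exact smul_ne_zero (ne_of_gt hsc) hΘ0
  · rintro ⟨hpN, hPP⟩
    obtain ⟨t, ht, hch⟩ := backward hlam1 ζ ε hζ hε Θ hΘ p hpN hPP
    exact ⟨hpN, t, ht, hch⟩
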